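/- Let G and H be nontrivial finite groups. The free product G * H is virtually infinite cyclic if and only if G and H both have order 2. -/

import Mathlib

open Monoid Subgroup Function

namespace VICAux

variable {ι : Type*} {M : ι → Type*} [∀ i, Group (M i)]

/-- The alternating `NeWord` representing `(of g * of h) ^ (n+1)`. -/
def pw {i j : ι} (hij : i ≠ j) (g : M i) (h : M j) (hg : g ≠ 1) (hh : h ≠ 1) :
    ℕ → Monoid.CoprodI.NeWord M i j
  | 0 => .append (.singleton g hg) hij (.singleton h hh)
  | (n+1) => .append (pw hij g h hg hh n) hij.symm
      (.append (.singleton g hg) hij (.singleton h hh))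

theorem pw_prod {i j : ι} (hij : i ≠ j) (g : M i) (h : M j) (hg : g ≠ 1) (hh : h ≠ 1) :
    ∀ n, (pw hij g h hg hh n).prod = (CoprodI.of g * CoprodI.of h) ^ (n + 1)
  | 0 => by simp [pw, CoprodI.NeWord.append_prod]
  | (n+1) => by
      simp only [pw, CoprodI.NeWord.append_prod, pw_prod hij g h hg hh n,
        CoprodI.NeWord.prod_singleton, pow_succ]

theorem pw_head {i j : ι} (hij : i ≠ j) (g : M i) (h : M j) (hg : g ≠ 1) (hh : h ≠ 1) :
    ∀ n, (pw hij g h hg hh n).head = g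
  | 0 => rfl
  | (n+1) => pw_head hij g h hg hh n

theorem prod_injective [DecidableEq ι] [∀ i, DecidableEq (M i)] :
    Function.Injective (CoprodI.Word.prod (M := M)) :=
  (CoprodI.Word.equiv (M := M)).symm.injective

theorem key_coprodI {i j : ι} (hij : i ≠ j) (g₁ g₂ : M i) (h : M j)
    (hg₁ : g₁ ≠ 1) (hg₂ : g₂ ≠ 1) (hh : h ≠ 1) (hne : g₁ ≠ g₂) (m m' : ℕ) :
    (CoprodI.of g₁ * CoprodI.of h) ^ (m + 1) * (CoprodI.of g₂ * CoprodI.of h) ^ (m' + 1) ≠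
      (CoprodI.of g₂ * CoprodI.of h) ^ (m' + 1) * (CoprodI.of g₁ * CoprodI.of h) ^ (m + 1) := by
  classical
  intro heq
  set W₁ : CoprodI.NeWord M i j :=
    .append (pw hij g₁ h hg₁ hh m) hij.symm (pw hij g₂ h hg₂ hh m') with hW₁
  set W₂ : CoprodI.NeWord M i j :=
    .append (pw hij g₂ h hg₂ hh m') hij.symm (pw hij g₁ h hg₁ hh m) with hW₂
  have h₁ : W₁.prod = (CoprodI.of g₁ * CoprodI.of h) ^ (m + 1) *
      (CoprodI.of g₂ * CoprodI.of h) ^ (m' + 1) := by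
    simp [hW₁, CoprodI.NeWord.append_prod, pw_prod]
  have h₂ : W₂.prod = (CoprodI.of g₂ * CoprodI.of h) ^ (m' + 1) *
      (CoprodI.of g₁ * CoprodI.of h) ^ (m + 1) := by
    simp [hW₂, CoprodI.NeWord.append_prod, pw_prod]
  have hW : W₁.toWord = W₂.toWord := prod_injective (by
    show W₁.toWord.prod = W₂.toWord.prod
    rw [show W₁.toWord.prod = W₁.prod from rfl, show W₂.toWord.prod = W₂.prod from rfl,
      h₁, h₂, heq])
  have hL : W₁.toList = W₂.toList := congrArg CoprodI.Word.toList hW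
  have hh₁ : W₁.toList.head? = some ⟨i, g₁⟩ := by
    rw [CoprodI.NeWord.toList_head?]
    simp [hW₁, pw_head]
  have hh₂ : W₂.toList.head? = some ⟨i, g₂⟩ := by
    rw [CoprodI.NeWord.toList_head?]
    simp [hW₂, pw_head]
  rw [hL, hh₂] at hh₁
  exact hne (eq_of_heq ((Sigma.mk.inj_iff.mp (Option.some.inj hh₁)).2.symm)) --  (Sigma.mk.inj_iff.mp (Option.some.inj hh₁)).2)


universe u v

/-- The two-element family of groups used to realize `A ∗ B` as a `CoprodI`. -/
def Fam (A : Type u) (B : Type v) : Bool → Type (max u v) :=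
  fun x => cond x (ULift.{v} A) (ULift.{u} B)

instance famGroup (A : Type u) (B : Type v) [Group A] [Group B] :
    ∀ x, Group (Fam A B x)
  | true => inferInstanceAs (Group (ULift A))
  | false => inferInstanceAs (Group (ULift B))

variable (A : Type u) (B : Type v) [Group A] [Group B]

/-- The canonical hom `CoprodI (Fam A B) →* A ∗ B`. -/
def psi : CoprodI (Fam A B) →* Coprod A B :=
  CoprodI.lift fun x => match x with
    | true => Coprod.inl.comp (MulEquiv.ulift (α := A)).toMonoidHom
    | false => Coprod.inr.comp (MulEquiv.ulift (α := B)).toMonoidHom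

/-- The canonical hom `A ∗ B →* CoprodI (Fam A B)`. -/
def phi : Coprod A B →* CoprodI (Fam A B) :=
  Coprod.lift
    ((CoprodI.of (M := Fam A B) (i := true)).comp
      (MulEquiv.ulift (α := A)).symm.toMonoidHom)
    ((CoprodI.of (M := Fam A B) (i := false)).comp
      (MulEquiv.ulift (α := B)).symm.toMonoidHom)

theorem phi_comp_psi : (phi A B).comp (psi A B) = MonoidHom.id _ := by
  refine CoprodI.ext_hom _ _ fun i => ?_
  ext x
  cases i <;> rfl

theorem psi_injective : Function.Injective (psi A B) :=
  Function.LeftInverse.injective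
    (g := phi A B) fun x => DFunLike.congr_fun (phi_comp_psi A B) x

theorem psi_of_true (a : A) :
    psi A B (CoprodI.of (M := Fam A B) (i := true) (ULift.up a)) = Coprod.inl a := by
  exact (CoprodI.lift_of (M := Fam A B) _ _).trans rfl

theorem psi_of_false (b : B) :
    psi A B (CoprodI.of (M := Fam A B) (i := false) (ULift.up b)) = Coprod.inr b := by
  exact (CoprodI.lift_of (M := Fam A B) _ _).trans rfl

theorem up_ne_one {α : Type*} [Group α] {a : α} (ha : a ≠ 1) : (ULift.up a : ULift α) ≠ 1 :=
  fun hc => ha (congrArg ULift.down hc)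

theorem key_coprod (g₁ g₂ : A) (b : B) (hg₁ : g₁ ≠ 1) (hg₂ : g₂ ≠ 1) (hb : b ≠ 1)
    (hne : g₁ ≠ g₂) (m m' : ℕ) :
    (Coprod.inl g₁ * Coprod.inr b : Coprod A B) ^ (m + 1) *
        (Coprod.inl g₂ * Coprod.inr b) ^ (m' + 1) ≠
      (Coprod.inl g₂ * Coprod.inr b) ^ (m' + 1) * (Coprod.inl g₁ * Coprod.inr b) ^ (m + 1) := by
  intro heq
  have htf : (true : Bool) ≠ false := by decide
  refine key_coprodI (M := Fam A B) htf (ULift.up g₁) (ULift.up g₂) (ULift.up b)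
    (up_ne_one hg₁) (up_ne_one hg₂) (up_ne_one hb)
    (fun hc => hne (congrArg ULift.down hc)) m m' (psi_injective A B ?_)
  simp only [map_mul, map_pow, psi_of_true, psi_of_false]
  exact heq


theorem exists_pow_mem {P : Type*} [Group P] (L : Subgroup P) (hfi : L.FiniteIndex) (u : P) :
    ∃ n : ℕ, u ^ (n + 1) ∈ L := by
  haveI := hfi
  obtain ⟨c, d, hcd, h⟩ := Finite.exists_ne_map_eq_of_infinite
      (fun n : ℕ => ((u ^ n : P) : P ⧸ L))
  have key : ∀ c d : ℕ, c < d → ((u ^ c : P) : P ⧸ L) = ((u ^ d : P) : P ⧸ L) →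
      ∃ n : ℕ, u ^ (n + 1) ∈ L := by
    intro c d hlt hq
    have hmem : (u ^ c)⁻¹ * u ^ d ∈ L := QuotientGroup.leftRel_apply.mp
      (Quotient.exact' hq)
    obtain ⟨k, rfl⟩ : ∃ k, d = c + (k + 1) := ⟨d - c - 1, by omega⟩
    refine ⟨k, ?_⟩
    have hpow : (u ^ c)⁻¹ * u ^ (c + (k + 1)) = u ^ (k + 1) := by
      rw [pow_add, inv_mul_cancel_left]
    rwa [hpow] at hmem
  rcases lt_or_gt_of_ne hcd with hlt | hlt
  · exact key c d hlt h
  · exact key d c hlt h.symm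

theorem card_eq_two_left {A B : Type*} [Group A] [Group B] [Finite A] [Nontrivial A]
    [Nontrivial B] (L : Subgroup (Monoid.Coprod A B)) (hfi : L.FiniteIndex)
    (hcomm : ∀ x ∈ L, ∀ y ∈ L, x * y = y * x) : Nat.card A = 2 := by
  by_contra hcard
  obtain ⟨g₁, hg₁⟩ := exists_ne (1 : A)
  have hex : ∃ g₂ : A, g₂ ≠ 1 ∧ g₁ ≠ g₂ := by
    by_contra hc
    push_neg at hc
    exact hcard ((Nat.card_eq_two_iff' (1 : A)).mpr ⟨g₁, hg₁, fun y hy => (hc y hy).symm⟩)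
  obtain ⟨g₂, hg₂, hne⟩ := hex
  obtain ⟨b, hb⟩ := exists_ne (1 : B)
  obtain ⟨m, hm⟩ := exists_pow_mem L hfi (Coprod.inl g₁ * Coprod.inr b)
  obtain ⟨m', hm'⟩ := exists_pow_mem L hfi (Coprod.inl g₂ * Coprod.inr b)
  exact key_coprod A B g₁ g₂ b hg₁ hg₂ hb hne m m' (hcomm _ hm _ hm')

/-- A monoid hom out of a group of order two. -/
def homOfOrderTwo {Γ P : Type*} [Group Γ] [Monoid P] [DecidableEq Γ] (a : Γ) (σ : P)
    (hU : ∀ x : Γ, x ≠ 1 → x = a) (haa : a * a = 1) (hσ : σ * σ = 1) : Γ →* P where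
  toFun x := if x = 1 then 1 else σ
  map_one' := if_pos rfl
  map_mul' x y := by
    by_cases hx : x = 1
    · simp [hx]
    by_cases hy : y = 1
    · simp [hy]
    show (if x * y = 1 then 1 else σ) = (if x = 1 then 1 else σ) * (if y = 1 then 1 else σ)
    rw [if_neg hx, if_neg hy, hU x hx, hU y hy, haa, if_pos rfl, hσ]

theorem exists_spec_of_card_two {Γ : Type*} [Group Γ] (h2 : Nat.card Γ = 2) :
    ∃ a : Γ, a ≠ 1 ∧ a * a = 1 ∧ ∀ x : Γ, x ≠ 1 → x = a := by
  obtain ⟨a, ha, hu⟩ := (Nat.card_eq_two_iff' (1 : Γ)).mp h2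
  refine ⟨a, ha, ?_, fun x hx => hu x hx⟩
  by_cases h : a * a = 1
  · exact h
  · exact absurd (mul_eq_right.mp (hu _ h)) ha

end VICAux

/-- A group is virtually infinite cyclic if it has a finite index subgroup isomorphic to ℤ. -/
def IsVirtuallyInfiniteCyclic (H : Type*) [Group H] : Prop :=
  ∃ L : Subgroup H, L.FiniteIndex ∧ Nonempty (L ≃* Multiplicative ℤ)

namespace VICAux

theorem reverse {A B : Type*} [Group A] [Group B] (hA : Nat.card A = 2) (hB : Nat.card B = 2) :
    IsVirtuallyInfiniteCyclic (Monoid.Coprod A B) := by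
  classical
  obtain ⟨a, ha1, haa, haU⟩ := exists_spec_of_card_two hA
  obtain ⟨b, hb1, hbb, hbU⟩ := exists_spec_of_card_two hB
  set z : Coprod A B := Coprod.inl a * Coprod.inr b with hz
  -- `z` has infinite order, via the infinite dihedral group
  have hzord : orderOf z = 0 := by
    let f : A →* DihedralGroup 0 :=
      homOfOrderTwo a (DihedralGroup.sr 0) haU haa (DihedralGroup.sr_mul_self 0)
    let g : B →* DihedralGroup 0 :=
      homOfOrderTwo b (DihedralGroup.sr 1) hbU hbb (DihedralGroup.sr_mul_self 1)
    have hφz : Coprod.lift f g z = DihedralGroup.r 1 := by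
      rw [hz, map_mul, Coprod.lift_apply_inl, Coprod.lift_apply_inr]
      show (if a = 1 then 1 else DihedralGroup.sr 0) *
          (if b = 1 then 1 else DihedralGroup.sr 1) = _
      rw [if_neg ha1, if_neg hb1, DihedralGroup.sr_mul_sr, sub_zero]
    have h1 := orderOf_map_dvd (Coprod.lift f g) z
    rw [hφz, DihedralGroup.orderOf_r_one] at h1
    exact Nat.eq_zero_of_zero_dvd h1
  have hzfin : ¬ IsOfFinOrder z := orderOf_eq_zero_iff.mp hzord
  refine ⟨Subgroup.zpowers z, ?_, ⟨?_⟩⟩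
  · -- finite index
    have hs_inv : (Coprod.inl a : Coprod A B)⁻¹ = Coprod.inl a := by
      rw [← map_inv, inv_eq_of_mul_eq_one_right haa]
    have ht_inv : (Coprod.inr b : Coprod A B)⁻¹ = Coprod.inr b := by
      rw [← map_inv, inv_eq_of_mul_eq_one_right hbb]
    have hconjs : Coprod.inl a * z * (Coprod.inl a)⁻¹ = z⁻¹ := by
      rw [hz, mul_inv_rev, hs_inv, ht_inv, ← mul_assoc, ← map_mul, haa, map_one, one_mul]
    have hconjt : Coprod.inr b * z * (Coprod.inr b)⁻¹ = z⁻¹ := by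
      rw [hz, mul_inv_rev, hs_inv, ht_inv, mul_assoc, mul_assoc, ← map_mul, hbb, map_one,
        mul_one]
    -- elements conjugating z to z⁻¹ normalize ⟨z⟩
    have main : ∀ w : Coprod A B, w * z * w⁻¹ = z⁻¹ →
        w ∈ Subgroup.normalizer (Subgroup.zpowers z : Set (Coprod A B)) := by
      intro w hwz
      have h1 : w⁻¹ * (w * z * w⁻¹) * w = z := by group
      rw [hwz] at h1
      have hwz' : w⁻¹ * z * w⁻¹⁻¹ = z⁻¹ := by
        rw [inv_inv]
        have h2 := congrArg Inv.inv h1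
        rw [← h2]; group
      have conj_mem : ∀ v : Coprod A B, v * z * v⁻¹ = z⁻¹ →
          ∀ x ∈ Subgroup.zpowers z, v * x * v⁻¹ ∈ Subgroup.zpowers z := by
        intro v hv x hx
        obtain ⟨k, rfl⟩ := Subgroup.mem_zpowers_iff.mp hx
        have hvk : v * z ^ k * v⁻¹ = (z⁻¹) ^ k := by rw [← conj_zpow, hv]
        rw [hvk]
        exact zpow_mem (inv_mem (Subgroup.mem_zpowers z)) k
      rw [Subgroup.mem_normalizer_iff]
      intro x
      constructor
      · exact fun hx => conj_mem w hwz x hx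
      · intro hx
        have h3 := conj_mem w⁻¹ hwz' _ hx
        have h4 : w⁻¹ * (w * x * w⁻¹) * w⁻¹⁻¹ = x := by group
        rwa [h4] at h3
    have hnorm : (Subgroup.zpowers z).Normal := by
      refine Subgroup.normalizer_eq_top_iff.mp ?_
      rw [eq_top_iff, ← Coprod.range_inl_sup_range_inr]
      refine sup_le ?_ ?_
      · rintro x ⟨u, rfl⟩
        rcases eq_or_ne u 1 with rfl | hu
        · rw [map_one]; exact one_mem _
        · rw [haU u hu]
          exact main _ hconjs
      · rintro x ⟨u, rfl⟩
        rcases eq_or_ne u 1 with rfl | hu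
        · rw [map_one]; exact one_mem _
        · rw [hbU u hu]
          exact main _ hconjt
    haveI := hnorm
    -- the quotient is finite
    have hmk_z : ((z : Coprod A B) : Coprod A B ⧸ Subgroup.zpowers z) = 1 :=
      (QuotientGroup.eq_one_iff z).mpr (Subgroup.mem_zpowers z)
    set sb : Coprod A B ⧸ Subgroup.zpowers z := ((Coprod.inl a : Coprod A B) :
      Coprod A B ⧸ Subgroup.zpowers z) with hsb
    have hmk_b : ((Coprod.inr b : Coprod A B) : Coprod A B ⧸ Subgroup.zpowers z) = sb⁻¹ := by
      have hone : sb * ((Coprod.inr b : Coprod A B) :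
          Coprod A B ⧸ Subgroup.zpowers z) = 1 := by
        rw [hsb, ← QuotientGroup.mk_mul, ← hz, hmk_z]
      exact (inv_eq_of_mul_eq_one_right hone).symm
    have hall : ∀ q : Coprod A B ⧸ Subgroup.zpowers z, q ∈ Subgroup.zpowers sb := by
      intro q
      obtain ⟨x, rfl⟩ := QuotientGroup.mk_surjective q
      have htop2 : (Subgroup.zpowers sb).comap
          (QuotientGroup.mk' (Subgroup.zpowers z)) = ⊤ := by
        rw [eq_top_iff, ← Coprod.range_inl_sup_range_inr]
        refine sup_le ?_ ?_
        · rintro y ⟨u, rfl⟩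
          rcases eq_or_ne u 1 with rfl | hu
          · rw [map_one]; exact one_mem _
          · rw [haU u hu]
            exact Subgroup.mem_comap.mpr (Subgroup.mem_zpowers sb)
        · rintro y ⟨u, rfl⟩
          rcases eq_or_ne u 1 with rfl | hu
          · rw [map_one]; exact one_mem _
          · rw [hbU u hu]
            refine Subgroup.mem_comap.mpr ?_
            show ((Coprod.inr b : Coprod A B) : Coprod A B ⧸ Subgroup.zpowers z) ∈ _
            rw [hmk_b]
            exact inv_mem (Subgroup.mem_zpowers sb)
      have : x ∈ (Subgroup.zpowers sb).comap (QuotientGroup.mk' (Subgroup.zpowers z)) := by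
        rw [htop2]; trivial
      exact Subgroup.mem_comap.mp this
    have hsb2 : sb * sb = 1 := by
      have hone : Coprod.inl a * Coprod.inl a = (1 : Coprod A B) := by
        rw [← map_mul, haa, map_one]
      rw [hsb, ← QuotientGroup.mk_mul, hone]
      rfl
    have hfinQ : Finite (Coprod A B ⧸ Subgroup.zpowers z) := by
      have hfin1 : IsOfFinOrder sb :=
        isOfFinOrder_iff_pow_eq_one.mpr ⟨2, two_pos, by rwa [pow_two]⟩
      have hfin2 : (Subgroup.zpowers sb : Set (Coprod A B ⧸ Subgroup.zpowers z)).Finite :=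
        hfin1.finite_zpowers
      exact Set.finite_univ_iff.mp (hfin2.subset fun q _ => hall q)
    haveI := hfinQ
    exact Subgroup.finiteIndex_of_finite_quotient
  · -- ⟨z⟩ ≃* Multiplicative ℤ
    have hinj : Function.Injective (fun n : ℤ => z ^ n) :=
      injective_zpow_iff_not_isOfFinOrder.mpr hzfin
    refine MulEquiv.symm (MulEquiv.ofBijective
      ({ toFun := fun n => ⟨z ^ (Multiplicative.toAdd n),
          Subgroup.mem_zpowers_iff.mpr ⟨Multiplicative.toAdd n, rfl⟩⟩
         map_one' := by
           ext
           show z ^ (0 : ℤ) = 1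
           exact zpow_zero z
         map_mul' := fun m n => by
           ext
           show z ^ (Multiplicative.toAdd m + Multiplicative.toAdd n) = _
           exact zpow_add z _ _ } :
        Multiplicative ℤ →* Subgroup.zpowers z) ⟨?_, ?_⟩)
    · intro m n h
      have hval : z ^ (Multiplicative.toAdd m) = z ^ (Multiplicative.toAdd n) :=
        congrArg Subtype.val h
      exact Multiplicative.toAdd.injective (hinj hval)
    · rintro ⟨x, hx⟩
      obtain ⟨k, rfl⟩ := Subgroup.mem_zpowers_iff.mp hx
      exact ⟨Multiplicative.ofAdd k, rfl⟩

end VICAux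

open VICAux in
/-- For nontrivial finite groups G and H, the free product G * H is virtually infinite
cyclic iff both G and H have order 2. -/
theorem coprod_virtually_infinite_cyclic_iff (G H : Type*) [Group G] [Group H]
    [Finite G] [Finite H] [Nontrivial G] [Nontrivial H] :
    IsVirtuallyInfiniteCyclic (Monoid.Coprod G H) ↔ Nat.card G = 2 ∧ Nat.card H = 2 := by
  constructor
  · rintro ⟨L, hfi, ⟨e⟩⟩
    have hcomm : ∀ x ∈ L, ∀ y ∈ L, x * y = y * x := by
      intro x hx y hy
      have h1 : e (⟨x, hx⟩ * ⟨y, hy⟩) = e (⟨y, hy⟩ * ⟨x, hx⟩) := by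
        rw [map_mul, map_mul, mul_comm]
      have h2 := e.injective h1
      exact congrArg Subtype.val h2
    constructor
    · exact card_eq_two_left L hfi hcomm
    · -- transport along the swap isomorphism
      set σ := (MulEquiv.coprodComm G H : Monoid.Coprod G H ≃* Monoid.Coprod H G)
      have hker : (σ.toMonoidHom).ker = ⊥ :=
        MonoidHom.ker_eq_bot_iff _ |>.mpr σ.injective
      have hidx : (L.map σ.toMonoidHom).index = L.index :=
        Subgroup.index_map_eq L σ.surjective (by rw [hker]; exact bot_le)
      refine card_eq_two_left (L.map σ.toMonoidHom) ⟨by rw [hidx]; exact hfi.index_ne_zero⟩ ?_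
      rintro x ⟨x', hx', rfl⟩ y ⟨y', hy', rfl⟩
      rw [← map_mul, ← map_mul, hcomm x' hx' y' hy']
  · rintro ⟨hG, hH⟩
    exact reverse hG hH
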